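/- arXiv:1910.07103 — 2 statements merged into one kernel-verified Lean document; each statement's English description precedes it below -/
import Mathlib

section
/- Let V ⊂ H be Hilbert spaces with continuous dense embedding, A the self-adjoint positive operator on H associated with a bounded coercive bilinear form a on V with continuity constant 𝓜 and coercivity constant α ( α‖u‖²_V ≤ a(u,u) and |a(u,v)| ≤ 𝓜‖u‖_V‖v‖_V ), and (ψᵢ) an H-orthonormal basis of eigenvectors of A with eigenvalues λᵢ. Then the projection P_m v = Σ_{i=0}^m (v,ψᵢ)_H ψᵢ satisfies ‖P_m‖_{𝓛(V)} ≤ 1 + 𝓜/α for every m. -/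
open scoped RealInnerProductSpace

/-- Uniform `V`-bound for the spectral Galerkin projections: if `a` is a
bounded (constant `𝓜`) coercive (constant `α`) bilinear form on `V` whose
associated operator has an `H`-orthonormal eigenbasis `ψ` (via the embedding
`ι : V → H`), then `‖P_m‖_{𝓛(V)} ≤ 1 + 𝓜/α` for every `m`. -/
theorem stmt9 {V H : Type*}
    [NormedAddCommGroup V] [NormedSpace ℝ V]
    [NormedAddCommGroup H] [InnerProductSpace ℝ H] [CompleteSpace H]
    (ι : V →L[ℝ] H) (hι : Function.Injective ι) (hdense : DenseRange ι)
    (a : V → V → ℝ)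
    (ha_add_l : ∀ u v w, a (u + v) w = a u w + a v w)
    (ha_smul_l : ∀ (c : ℝ) u v, a (c • u) v = c * a u v)
    (ha_add_r : ∀ u v w, a u (v + w) = a u v + a u w)
    (ha_smul_r : ∀ (c : ℝ) u v, a u (c • v) = c * a u v)
    (𝓜 α : ℝ) (hα : 0 < α)
    (hbdd : ∀ u v, |a u v| ≤ 𝓜 * ‖u‖ * ‖v‖)
    (hcoer : ∀ u, α * ‖u‖ ^ 2 ≤ a u u)
    (ψ : ℕ → V) (lam : ℕ → ℝ)
    (horth : ∀ i j, ⟪ι (ψ i), ι (ψ j)⟫ = if i = j then (1:ℝ) else 0)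
    (heig : ∀ i v, a (ψ i) v = lam i * ⟪ι (ψ i), ι v⟫)
    (m : ℕ) :
    ∀ v : V,
      ‖∑ i ∈ Finset.range (m + 1), ⟪ι (ψ i), ι v⟫ • ψ i‖ ≤ (1 + 𝓜 / α) * ‖v‖ := by
  intro v
  set c : ℕ → ℝ := fun i => ⟪ι (ψ i), ι v⟫ with hc
  set w : V := ∑ i ∈ Finset.range (m + 1), c i • ψ i with hw
  have hzero : ∀ u : V, a 0 u = 0 := by
    intro u
    have := ha_smul_l 0 0 u
    simpa using this
  have hsum_l : ∀ (s : Finset ℕ) (u : V),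
      a (∑ i ∈ s, c i • ψ i) u = ∑ i ∈ s, c i * a (ψ i) u := by
    intro s u
    induction s using Finset.induction with
    | empty => simpa using hzero u
    | insert x s h ih =>
        rw [Finset.sum_insert h, ha_add_l, ha_smul_l, ih, Finset.sum_insert h]
  have hinner : ∀ i ∈ Finset.range (m + 1), ⟪ι (ψ i), ι w⟫ = c i := by
    intro i hi
    have hmap : ι w = ∑ j ∈ Finset.range (m + 1), c j • ι (ψ j) := by
      simp [hw, map_sum]
    rw [hmap, inner_sum]
    simp only [real_inner_smul_right, horth, mul_ite, mul_one, mul_zero]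
    rw [Finset.sum_ite_eq (Finset.range (m + 1)) i c]
    simp [hi]
  have haww : a w w = a w v := by
    rw [hw, hsum_l, hsum_l]
    apply Finset.sum_congr rfl
    intro i hi
    rw [heig, heig, hinner i hi]
  have key : α * ‖w‖ ^ 2 ≤ 𝓜 * ‖w‖ * ‖v‖ :=
    calc α * ‖w‖ ^ 2 ≤ a w w := hcoer w
      _ = a w v := haww
      _ ≤ |a w v| := le_abs_self _
      _ ≤ 𝓜 * ‖w‖ * ‖v‖ := hbdd w v
  rcases eq_or_lt_of_le (norm_nonneg w) with hw0 | hw0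
  · rw [← hw0]
    rcases eq_or_ne v 0 with rfl | hv0
    · simp
    · have hv : 0 < ‖v‖ := norm_pos_iff.mpr hv0
      have h1 : α * ‖v‖ ^ 2 ≤ 𝓜 * ‖v‖ * ‖v‖ :=
        (hcoer v).trans ((le_abs_self _).trans (hbdd v v))
      have hMα : α ≤ 𝓜 := by nlinarith [h1, mul_pos hv hv, sq_nonneg ‖v‖]
      have : 0 ≤ 𝓜 / α := div_nonneg (hα.le.trans hMα) hα.le
      positivity
  · have h3 : α * ‖w‖ ≤ 𝓜 * ‖v‖ := le_of_mul_le_mul_right (by nlinarith [key]) hw0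
    have h4 : ‖w‖ ≤ 𝓜 / α * ‖v‖ := by
      rw [div_mul_eq_mul_div, le_div_iff₀ hα]
      nlinarith [h3]
    have h5 : 𝓜 / α * ‖v‖ ≤ (1 + 𝓜 / α) * ‖v‖ := by nlinarith [norm_nonneg v]
    linarith
end

section
/- Let F : ℝ → ℝ be continuous and T-periodic (viewing F as F(t, U(t)) evaluated along any continuous T-periodic U : ℝ → ℝⁿ), λ > 0, and K(t,τ) the periodic Green kernel for u' = −λu on [0,T]. Then for any continuous T-periodic b : ℝ → ℝⁿ, U is a T-periodic solution of U' = −λU + b(t) if and only if U(t) = ∫₀ᵀ K(t,τ) b(τ) dτ for t ∈ [0,T]; consequently a continuous T-periodic U is a solution of the quasilinear equation U' = −λU + F(t, U(t)) if and only if U is a fixed point of the operator 𝒦(U)(t) = ∫₀ᵀ K(t,τ)F(τ, U(τ))dτ. -/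
open MeasureTheory intervalIntegral Set

section Aux
variable {E : Type*} [NormedAddCommGroup E] [NormedSpace ℝ E] [CompleteSpace E]

lemma gcont (lam : ℝ) {b : ℝ → E} (hb : Continuous b) :
    Continuous (fun τ => Real.exp (lam*τ) • b τ) :=
  (Real.continuous_exp.comp (continuous_const.mul continuous_id)).smul hb

lemma A_deriv (lam : ℝ) {b : ℝ → E} (hb : Continuous b) (t : ℝ) :
    HasDerivAt (fun s => ∫ τ in (0:ℝ)..s, Real.exp (lam*τ) • b τ)
      (Real.exp (lam*t) • b t) t := by
  refine intervalIntegral.integral_hasDerivAt_right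
    ((gcont lam hb).intervalIntegrable _ _)
    ((gcont lam hb).stronglyMeasurableAtFilter _ _)
    (gcont lam hb).continuousAt

lemma cq_fact {lam T : ℝ} (hlam : 0 < lam) (hT : 0 < T) :
    (1 - Real.exp (-lam*T))⁻¹ * (1 - Real.exp (-lam*T)) = 1 := by
  have h : Real.exp (-lam*T) < 1 := by
    rw [Real.exp_lt_one_iff]; nlinarith
  exact inv_mul_cancel₀ (by linarith)

end Aux

section Aux2
variable {E : Type*} [NormedAddCommGroup E] [NormedSpace ℝ E] [CompleteSpace E]

lemma key_integral (lam T : ℝ) (hlam : 0 < lam) (hT : 0 < T) {b : ℝ → E}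
    (hb : Continuous b) {t : ℝ} (ht : t ∈ Set.Icc (0:ℝ) T) :
    (∫ τ in (0:ℝ)..T,
      (if τ ≤ t then (1 - Real.exp (-lam * T))⁻¹ * Real.exp (-lam * (t - τ))
       else (1 - Real.exp (-lam * T))⁻¹ * Real.exp (-lam * (t + T - τ))) • b τ)
    = Real.exp (-lam*t) •
        (((1 - Real.exp (-lam*T))⁻¹ * Real.exp (-lam*T)) •
          (∫ τ in (0:ℝ)..T, Real.exp (lam*τ) • b τ)
         + ∫ τ in (0:ℝ)..t, Real.exp (lam*τ) • b τ) := by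
  obtain ⟨ht0, htT⟩ := ht
  set c := (1 - Real.exp (-lam*T))⁻¹ with hc
  set q := Real.exp (-lam*T) with hq
  set A : ℝ → E := fun s => ∫ τ in (0:ℝ)..s, Real.exp (lam*τ) • b τ with hA
  set f : ℝ → E := fun τ =>
      (if τ ≤ t then c * Real.exp (-lam * (t - τ))
       else c * Real.exp (-lam * (t + T - τ))) • b τ with hf
  have hexp : ∀ r : ℝ, Continuous fun τ : ℝ => Real.exp (-lam * (r - τ)) := fun r =>
    Real.continuous_exp.comp (continuous_const.mul (continuous_const.sub continuous_id))
  have hf1 : Continuous fun τ => (c * Real.exp (-lam*(t-τ))) • b τ :=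
    (continuous_const.mul (hexp t)).smul hb
  have hf2 : Continuous fun τ => (c * Real.exp (-lam*(t+T-τ))) • b τ :=
    (continuous_const.mul (hexp (t+T))).smul hb
  have hi1 : IntervalIntegrable f volume 0 t := by
    rw [intervalIntegrable_iff_integrableOn_Ioc_of_le ht0]
    refine (hf1.integrableOn_Ioc).congr_fun ?_ measurableSet_Ioc
    intro τ hτ
    simp only [hf, if_pos hτ.2]
  have hi2 : IntervalIntegrable f volume t T := by
    rw [intervalIntegrable_iff_integrableOn_Ioc_of_le htT]
    refine (hf2.integrableOn_Ioc).congr_fun ?_ measurableSet_Ioc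
    intro τ hτ
    simp only [hf, if_neg (not_le.mpr hτ.1)]
  have hsplit : (∫ τ in (0:ℝ)..t, f τ) + ∫ τ in t..T, f τ = ∫ τ in (0:ℝ)..T, f τ :=
    intervalIntegral.integral_add_adjacent_intervals hi1 hi2
  have e1 : (∫ τ in (0:ℝ)..t, f τ) = (c * Real.exp (-lam*t)) • A t := by
    rw [show (∫ τ in (0:ℝ)..t, f τ)
        = ∫ τ in (0:ℝ)..t, (c * Real.exp (-lam*t)) • (Real.exp (lam*τ) • b τ) from ?_]
    · rw [intervalIntegral.integral_smul]
    · apply intervalIntegral.integral_congr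
      intro τ hτ
      rw [Set.uIcc_of_le ht0] at hτ
      simp only [hf, if_pos hτ.2, smul_smul]
      congr 1
      rw [show -lam*(t-τ) = -lam*t + lam*τ from by ring, Real.exp_add, mul_assoc]
  have e2 : (∫ τ in t..T, f τ) = (c * Real.exp (-lam*(t+T))) • (A T - A t) := by
    rw [show (∫ τ in t..T, f τ)
        = ∫ τ in t..T, (c * Real.exp (-lam*(t+T))) • (Real.exp (lam*τ) • b τ) from ?_]
    · rw [intervalIntegral.integral_smul]
      congr 1
      rw [hA]
      exact (intervalIntegral.integral_interval_sub_left
        ((gcont lam hb).intervalIntegrable _ _) ((gcont lam hb).intervalIntegrable _ _)).symm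
    · apply intervalIntegral.integral_congr_ae
      filter_upwards with τ hτ
      rw [Set.uIoc_of_le htT] at hτ
      simp only [hf, if_neg (not_le.mpr hτ.1), smul_smul]
      congr 1
      rw [show -lam*(t+T-τ) = -lam*(t+T) + lam*τ from by ring, Real.exp_add, mul_assoc]
  have hcq : c * (1 - q) = 1 := cq_fact hlam hT
  have h1 : c * Real.exp (-lam*(t+T)) = Real.exp (-lam*t) * (c*q) := by
    rw [show -lam*(t+T) = -lam*t + -lam*T from by ring, Real.exp_add, hq]; ring
  have h2 : c * Real.exp (-lam*t)
      = Real.exp (-lam*t)*(c*q) + Real.exp (-lam*t) := by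
    have h3 : c = c*q + 1 := by linear_combination hcq
    linear_combination Real.exp (-lam*t) * h3
  calc ∫ τ in (0:ℝ)..T, f τ
      = (c * Real.exp (-lam*t)) • A t + (c * Real.exp (-lam*(t+T))) • (A T - A t) := by
        rw [← hsplit, e1, e2]
    _ = Real.exp (-lam*t) • ((c*q) • A T + A t) := by
        rw [smul_sub, h1, h2, add_smul, smul_add, smul_smul]
        abel
end Aux2

section Aux3
variable {E : Type*} [NormedAddCommGroup E] [NormedSpace ℝ E] [CompleteSpace E]

lemma rep_of_deriv (lam : ℝ) {b U : ℝ → E} (hb : Continuous b)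
    (hder : ∀ s, HasDerivAt U (-lam • U s + b s) s) (t : ℝ) :
    U t = Real.exp (-lam*t) • (U 0 + ∫ τ in (0:ℝ)..t, Real.exp (lam*τ) • b τ) := by
  have hV : ∀ s, HasDerivAt (fun s => Real.exp (lam*s) • U s) (Real.exp (lam*s) • b s) s := by
    intro s
    have h0 : HasDerivAt (fun s : ℝ => lam * s) lam s := by
      simpa using (hasDerivAt_id s).const_mul lam
    have h2 := (h0.exp).smul (hder s)
    convert h2 using 1
    · rfl
    rw [smul_add, smul_smul,
      show Real.exp (lam*s) * -lam = -(Real.exp (lam*s) * lam) from by ring, neg_smul]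
    abel
  have hint : (∫ τ in (0:ℝ)..t, Real.exp (lam*τ) • b τ)
      = Real.exp (lam*t) • U t - Real.exp (lam*0) • U 0 :=
    intervalIntegral.integral_eq_sub_of_hasDerivAt (fun x _ => hV x)
      ((gcont lam hb).intervalIntegrable _ _)
  rw [hint, show Real.exp (lam*0) = 1 from by simp, one_smul,
    show U 0 + (Real.exp (lam*t) • U t - U 0) = Real.exp (lam*t) • U t from by abel,
    smul_smul, ← Real.exp_add, show -lam*t + lam*t = 0 from by ring, Real.exp_zero, one_smul]

lemma U0_eq (lam T : ℝ) (hlam : 0 < lam) (hT : 0 < T) {b U : ℝ → E} (hb : Continuous b)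
    (hper : ∀ t, U (t+T) = U t) (hder : ∀ s, HasDerivAt U (-lam • U s + b s) s) :
    U 0 = ((1 - Real.exp (-lam*T))⁻¹ * Real.exp (-lam*T)) •
      ∫ τ in (0:ℝ)..T, Real.exp (lam*τ) • b τ := by
  have hrep := rep_of_deriv lam hb hder T
  have hUT : U T = U 0 := by simpa using hper 0
  rw [hUT] at hrep
  have h1 : (1 - Real.exp (-lam*T)) • U 0
      = Real.exp (-lam*T) • ∫ τ in (0:ℝ)..T, Real.exp (lam*τ) • b τ := by
    calc (1 - Real.exp (-lam*T)) • U 0 = U 0 - Real.exp (-lam*T) • U 0 := by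
          rw [sub_smul, one_smul]
      _ = Real.exp (-lam*T) • (U 0 + ∫ τ in (0:ℝ)..T, Real.exp (lam*τ) • b τ)
            - Real.exp (-lam*T) • U 0 := by rw [← hrep]
      _ = Real.exp (-lam*T) • ∫ τ in (0:ℝ)..T, Real.exp (lam*τ) • b τ := by
          rw [smul_add]; abel
  have h2 := cq_fact hlam hT
  calc U 0 = ((1 - Real.exp (-lam*T))⁻¹ * (1 - Real.exp (-lam*T))) • U 0 := by
        rw [h2, one_smul]
    _ = (1 - Real.exp (-lam*T))⁻¹ • ((1 - Real.exp (-lam*T)) • U 0) := by rw [mul_smul]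
    _ = (1 - Real.exp (-lam*T))⁻¹ • (Real.exp (-lam*T) •
          ∫ τ in (0:ℝ)..T, Real.exp (lam*τ) • b τ) := by rw [h1]
    _ = _ := by rw [smul_smul]

lemma ext_periodic {T : ℝ} (hT : 0 < T) {f g : ℝ → E}
    (hf : ∀ t, f (t+T) = f t) (hg : ∀ t, g (t+T) = g t)
    (h : ∀ t ∈ Set.Icc (0:ℝ) T, f t = g t) (t : ℝ) : f t = g t := by
  have hfp : Function.Periodic f T := hf
  have hgp : Function.Periodic g T := hg
  have h1 := hfp.sub_int_mul_eq (x := t) ⌊t/T⌋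
  have h2 := hgp.sub_int_mul_eq (x := t) ⌊t/T⌋
  rw [← h1, ← h2]
  exact h _ ⟨Int.sub_floor_div_mul_nonneg t hT,
    le_of_lt (Int.sub_floor_div_mul_lt t hT)⟩

end Aux3

section Aux4
variable {E : Type*} [NormedAddCommGroup E] [NormedSpace ℝ E] [CompleteSpace E]

lemma Wlem (lam T : ℝ) (hlam : 0 < lam) (hT : 0 < T) {b : ℝ → E}
    (hb : Continuous b) (hbper : ∀ t, b (t+T) = b t) :
    ∃ W : ℝ → E, (∀ t, W (t+T) = W t) ∧ (∀ t, HasDerivAt W (-lam • W t + b t) t) ∧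
      ∀ t, W t = Real.exp (-lam*t) •
        (((1 - Real.exp (-lam*T))⁻¹ * Real.exp (-lam*T)) •
          (∫ τ in (0:ℝ)..T, Real.exp (lam*τ) • b τ)
         + ∫ τ in (0:ℝ)..t, Real.exp (lam*τ) • b τ) := by
  set c := (1 - Real.exp (-lam*T))⁻¹ with hc
  set q := Real.exp (-lam*T) with hq
  set A : ℝ → E := fun s => ∫ τ in (0:ℝ)..s, Real.exp (lam*τ) • b τ with hA
  set U0 : E := (c*q) • A T with hU0
  refine ⟨fun t => Real.exp (-lam*t) • (U0 + A t), ?_, ?_, fun t => rfl⟩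
  · -- periodicity
    intro t
    have hAper : A (t+T) = A T + Real.exp (lam*T) • A t := by
      have hs : A (t+T) - A T = ∫ τ in T..(t+T), Real.exp (lam*τ) • b τ :=
        intervalIntegral.integral_interval_sub_left
          ((gcont lam hb).intervalIntegrable _ _) ((gcont lam hb).intervalIntegrable _ _)
      have hshift : (∫ τ in (0:ℝ)..t, Real.exp (lam*(τ+T)) • b (τ+T))
          = ∫ τ in T..(t+T), Real.exp (lam*τ) • b τ := by
        simpa using intervalIntegral.integral_comp_add_right (a := (0:ℝ)) (b := t)
          (fun τ => Real.exp (lam*τ) • b τ) T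
      have hval : (∫ τ in (0:ℝ)..t, Real.exp (lam*(τ+T)) • b (τ+T))
          = Real.exp (lam*T) • A t := by
        rw [show (fun τ => Real.exp (lam*(τ+T)) • b (τ+T))
            = fun τ => Real.exp (lam*T) • (Real.exp (lam*τ) • b τ) from ?_]
        · rw [intervalIntegral.integral_smul]
        · funext τ
          rw [hbper, smul_smul, ← Real.exp_add]
          congr 2
          ring
      have h5 := hs.trans (hshift.symm.trans hval)
      -- h5 : A (t+T) - A T = exp(lam*T) • A t
      rw [sub_eq_iff_eq_add] at h5
      rw [h5]; abel
    show Real.exp (-lam*(t+T)) • (U0 + A (t+T)) = Real.exp (-lam*t) • (U0 + A t)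
    rw [hAper, show Real.exp (-lam*(t+T)) = Real.exp (-lam*t) * q from by
        rw [hq, ← Real.exp_add]; congr 1; ring, mul_smul]
    congr 1
    rw [smul_add, smul_add, smul_smul, smul_smul, show q * Real.exp (lam*T) = 1 from by
        rw [hq, ← Real.exp_add]; norm_num, one_smul, ← add_assoc]
    congr 1
    rw [hU0, ← add_smul]
    congr 1
    have h3 : c = c*q + 1 := by linear_combination cq_fact hlam hT
    linear_combination (-q) * h3
  · -- derivative
    intro t
    have h0 : HasDerivAt (fun t : ℝ => -lam * t) (-lam) t := by
      simpa using (hasDerivAt_id t).const_mul (-lam)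
    have h2 := (h0.exp).smul ((A_deriv lam hb t).const_add U0)
    have e1 : Real.exp (-lam*t) • Real.exp (lam*t) • b t = b t := by
      rw [smul_smul, ← Real.exp_add, show -lam*t + lam*t = 0 from by ring,
        Real.exp_zero, one_smul]
    have e2 : ∀ x : E, (Real.exp (-lam*t) * -lam) • x
        = -lam • Real.exp (-lam*t) • x := by
      intro x; rw [smul_smul, mul_comm]
    convert h2 using 1
    · rfl
    rw [e1, e2]
    abel

end Aux4



/-- Farkas correspondence: for `λ > 0` and the periodic Green kernel `K`,
a continuous `T`-periodic `U` solves `U' = −λU + b(t)` iff it is given by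
`U(t) = ∫₀ᵀ K(t,τ)b(τ)dτ` on `[0,T]`; consequently a continuous `T`-periodic
`U` solves the quasilinear equation `U' = −λU + F(t,U(t))` iff `U` is a fixed
point of the operator `𝒦(U)(t) = ∫₀ᵀ K(t,τ)F(τ,U(τ))dτ`. -/
theorem stmt19 {n : ℕ} (lam T : ℝ) (hlam : 0 < lam) (hT : 0 < T)
    (F : ℝ → EuclideanSpace ℝ (Fin n) → EuclideanSpace ℝ (Fin n))
    (hFcont : Continuous fun p : ℝ × EuclideanSpace ℝ (Fin n) => F p.1 p.2)
    (hFper : ∀ t x, F (t + T) x = F t x) :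
    (∀ b : ℝ → EuclideanSpace ℝ (Fin n), Continuous b → (∀ t, b (t + T) = b t) →
      ∀ U : ℝ → EuclideanSpace ℝ (Fin n),
        ((∀ t, U (t + T) = U t) ∧
          ∀ t, HasDerivAt U (-lam • U t + b t) t)
        ↔
        ((Continuous U ∧ ∀ t, U (t + T) = U t) ∧
          ∀ t ∈ Set.Icc (0:ℝ) T,
            U t = ∫ τ in (0:ℝ)..T,
              (if τ ≤ t then (1 - Real.exp (-lam * T))⁻¹ * Real.exp (-lam * (t - τ))
               else (1 - Real.exp (-lam * T))⁻¹ * Real.exp (-lam * (t + T - τ)))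
              • b τ))
    ∧
    (∀ U : ℝ → EuclideanSpace ℝ (Fin n),
      Continuous U → (∀ t, U (t + T) = U t) →
      ((∀ t, HasDerivAt U (-lam • U t + F t (U t)) t)
        ↔
        ∀ t ∈ Set.Icc (0:ℝ) T,
          U t = ∫ τ in (0:ℝ)..T,
            (if τ ≤ t then (1 - Real.exp (-lam * T))⁻¹ * Real.exp (-lam * (t - τ))
             else (1 - Real.exp (-lam * T))⁻¹ * Real.exp (-lam * (t + T - τ)))
            • F τ (U τ))) := by
  have main : ∀ b : ℝ → EuclideanSpace ℝ (Fin n), Continuous b → (∀ t, b (t + T) = b t) →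
      ∀ U : ℝ → EuclideanSpace ℝ (Fin n),
        ((∀ t, U (t + T) = U t) ∧
          ∀ t, HasDerivAt U (-lam • U t + b t) t)
        ↔
        ((Continuous U ∧ ∀ t, U (t + T) = U t) ∧
          ∀ t ∈ Set.Icc (0:ℝ) T,
            U t = ∫ τ in (0:ℝ)..T,
              (if τ ≤ t then (1 - Real.exp (-lam * T))⁻¹ * Real.exp (-lam * (t - τ))
               else (1 - Real.exp (-lam * T))⁻¹ * Real.exp (-lam * (t + T - τ)))
              • b τ) := by
    intro b hb hbper U
    constructor
    · rintro ⟨hper, hder⟩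
      have hUc : Continuous U :=
        continuous_iff_continuousAt.mpr fun t => (hder t).continuousAt
      refine ⟨⟨hUc, hper⟩, fun t ht => ?_⟩
      rw [key_integral lam T hlam hT hb ht, rep_of_deriv lam hb hder t,
        U0_eq lam T hlam hT hb hper hder]
    · rintro ⟨⟨hUc, hper⟩, hform⟩
      obtain ⟨W, hWper, hWder, hWval⟩ := Wlem lam T hlam hT hb hbper
      have hUW : ∀ t, U t = W t := ext_periodic hT hper hWper fun t ht => by
        rw [hform t ht, key_integral lam T hlam hT hb ht, hWval t]
      have hUWf : U = W := funext hUW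
      refine ⟨hper, fun t => ?_⟩
      rw [hUWf]
      exact hWder t
  refine ⟨main, fun U hUc hUper => ?_⟩
  have hb : Continuous fun t => F t (U t) := hFcont.comp (continuous_id.prodMk hUc)
  have hbper : ∀ t, (fun t => F t (U t)) (t + T) = (fun t => F t (U t)) t := fun t => by
    simp only
    rw [hUper, hFper]
  have h := main (fun t => F t (U t)) hb hbper U
  constructor
  · intro hder
    exact (h.mp ⟨hUper, hder⟩).2
  · intro hform
    exact (h.mpr ⟨⟨hUc, hUper⟩, hform⟩).2
end
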